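/- Let x₁,...,x_k be i.i.d. Cauchy with location 0 and scale d > 0, with k > 2, and let d̂ = cos^k(π/(2k)) · ∏_{j=1}^k |x_j|^{1/k}. Then Var(d̂) = d²·(cos^{2k}(π/(2k)) / cos^k(π/k) − 1). -/

import Mathlib

open Real MeasureTheory ProbabilityTheory

/-- The Cauchy distribution with location 0 and scale `d`, as a measure on `ℝ`
with density `d / (π (x² + d²))`. -/
noncomputable def cauchyMeasure (d : ℝ) : Measure ℝ :=
  volume.withDensity fun x => ENNReal.ofReal (d / (π * (x ^ 2 + d ^ 2)))

open Set
open scoped ENNReal NNReal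


lemma complexBeta_eq {s : ℝ} (h0 : 0 < s) (h1 : s < 1) :
    Complex.betaIntegral s (1 - s) = ((π / Real.sin (π * s) : ℝ) : ℂ) := by
  have hu : 0 < (s:ℂ).re := by simpa using h0
  have hv : 0 < (1 - (s:ℂ)).re := by simp [Complex.sub_re]; linarith
  have h := Complex.Gamma_mul_Gamma_eq_betaIntegral hu hv
  rw [add_sub_cancel, Complex.Gamma_one, one_mul] at h
  rw [← h]
  have : ((s:ℂ)) = ((s:ℝ):ℂ) := rfl
  rw [show (1 - (s:ℂ)) = (((1 - s : ℝ)):ℂ) by push_cast; ring,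
    Complex.Gamma_ofReal, Complex.Gamma_ofReal, ← Complex.ofReal_mul,
    Real.Gamma_mul_Gamma_one_sub]

lemma beta_ofReal {s x : ℝ} (hx : x ∈ Ioo (0:ℝ) 1) :
    (x:ℂ) ^ ((s:ℂ) - 1) * (1 - (x:ℂ)) ^ ((1 - (s:ℂ)) - 1)
      = ((x ^ (s-1) * (1-x) ^ (-s) : ℝ) : ℂ) := by
  rw [show ((s:ℂ) - 1) = ((s - 1 : ℝ) : ℂ) by push_cast; ring,
    show ((1 - (s:ℂ)) - 1) = ((-s : ℝ) : ℂ) by push_cast; ring,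
    show (1 - (x:ℂ)) = ((1 - x : ℝ) : ℂ) by push_cast; ring,
    ← Complex.ofReal_cpow hx.1.le, ← Complex.ofReal_cpow (by linarith [hx.2] : (0:ℝ) ≤ 1 - x),
    ← Complex.ofReal_mul]

lemma realBeta_integrable {s : ℝ} (h0 : 0 < s) (h1 : s < 1) :
    IntegrableOn (fun t : ℝ => t ^ (s-1) * (1-t) ^ (-s)) (Ioo 0 1) := by
  have hu : 0 < (s:ℂ).re := by simpa using h0
  have hv : 0 < (1 - (s:ℂ)).re := by simp [Complex.sub_re]; linarith
  have hc := (Complex.betaIntegral_convergent hu hv).1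
  have hc' := (hc.mono_set Ioo_subset_Ioc_self).re
  refine IntegrableOn.congr_fun hc' (fun x hx => ?_) measurableSet_Ioo
  rw [beta_ofReal hx]; simp

lemma realBeta_integral {s : ℝ} (h0 : 0 < s) (h1 : s < 1) :
    ∫ t in Ioo (0:ℝ) 1, t ^ (s-1) * (1-t) ^ (-s) = π / Real.sin (π * s) := by
  have h := complexBeta_eq h0 h1
  rw [Complex.betaIntegral, intervalIntegral.integral_of_le zero_le_one] at h
  have e1 : (∫ x in Ioc (0:ℝ) 1, (x:ℂ) ^ ((s:ℂ) - 1) * (1 - (x:ℂ)) ^ ((1 - (s:ℂ)) - 1))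
      = ∫ x in Ioo (0:ℝ) 1, ((x ^ (s-1) * (1-x) ^ (-s) : ℝ) : ℂ) := by
    rw [integral_Ioc_eq_integral_Ioo]
    exact setIntegral_congr_fun measurableSet_Ioo (fun x hx => beta_ofReal hx)
  have e2 : (∫ x in Ioo (0:ℝ) 1, ((x ^ (s-1) * (1-x) ^ (-s) : ℝ) : ℂ))
      = ((∫ t in Ioo (0:ℝ) 1, t ^ (s-1) * (1-t) ^ (-s) : ℝ) : ℂ) := integral_ofReal
  rw [e1, e2] at h
  exact_mod_cast h

section CoV
-- substitution x ↦ x/(1+x) from Ioi 0 onto Ioo 0 1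

lemma phi_img : (fun x : ℝ => x / (1 + x)) '' Ioi 0 = Ioo 0 1 := by
  ext t
  constructor
  · rintro ⟨x, hx, rfl⟩
    have h1 : (0:ℝ) < 1 + x := by linarith [mem_Ioi.mp hx]
    exact ⟨div_pos (mem_Ioi.mp hx) h1, by rw [div_lt_one h1]; linarith [mem_Ioi.mp hx]⟩
  · rintro ⟨h0, h1⟩
    refine ⟨t / (1 - t), div_pos h0 (by linarith), ?_⟩
    have : (1:ℝ) - t ≠ 0 := by linarith
    field_simp
    ring

lemma phi_inj : InjOn (fun x : ℝ => x / (1 + x)) (Ioi 0) := by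
  intro a ha b hb h
  have ha1 : (1:ℝ) + a ≠ 0 := by have := mem_Ioi.mp ha; positivity
  have hb1 : (1:ℝ) + b ≠ 0 := by have := mem_Ioi.mp hb; positivity
  field_simp at h
  linarith

lemma phi_deriv : ∀ x ∈ Ioi (0:ℝ), HasDerivWithinAt (fun x : ℝ => x / (1 + x))
    (((1 + x) ^ 2)⁻¹) (Ioi 0) x := by
  intro x hx
  have h1 : (1:ℝ) + x ≠ 0 := by have := mem_Ioi.mp hx; positivity
  have := (hasDerivAt_id x).div ((hasDerivAt_id x).const_add 1) h1
  exact (this.congr_deriv (by simp only [id]; ring)).hasDerivWithinAt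

lemma phi_integrand_eq {s : ℝ} {x : ℝ} (hx : x ∈ Ioi (0:ℝ)) :
    |((1 + x) ^ 2)⁻¹| • ((x / (1 + x)) ^ (s-1) * (1 - x / (1 + x)) ^ (-s))
      = x ^ (s-1) / (1 + x) := by
  have hx0 : (0:ℝ) < x := hx
  have h1 : (0:ℝ) < 1 + x := by linarith
  have e0 : (1:ℝ) - x / (1 + x) = (1 + x)⁻¹ := by field_simp; ring
  have e1 : ((1+x)⁻¹) ^ (-s) = (1+x) ^ s := by
    rw [← Real.rpow_neg_one (1+x), ← Real.rpow_mul h1.le]; norm_num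
  have e2 : ((1+x)^2)⁻¹ = (1+x) ^ (-(2:ℝ)) := by
    rw [← Real.rpow_natCast (1+x) 2, ← Real.rpow_neg h1.le]; norm_num
  rw [e0, e1, e2, abs_of_pos (Real.rpow_pos_of_pos h1 _), div_rpow hx0.le h1.le, smul_eq_mul]
  rw [div_eq_mul_inv (x^(s-1)) ((1+x)^(s-1)), ← Real.rpow_neg h1.le]
  rw [show (1+x) ^ (-(2:ℝ)) * (x ^ (s-1) * (1+x) ^ (-(s-1)) * (1+x) ^ s)
      = x^(s-1) * ((1+x) ^ (-(2:ℝ)) * (1+x) ^ (-(s-1)) * (1+x) ^ s) by ring,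
    ← Real.rpow_add h1, ← Real.rpow_add h1]
  rw [show -2 + -(s-1) + s = (-1:ℝ) by ring, Real.rpow_neg_one, div_eq_mul_inv]

lemma mellin_integral {s : ℝ} (h0 : 0 < s) (h1 : s < 1) :
    ∫ x in Ioi (0:ℝ), x ^ (s-1) / (1 + x) = π / Real.sin (π * s) := by
  have h := integral_image_eq_integral_abs_deriv_smul measurableSet_Ioi phi_deriv phi_inj
      (fun t => t ^ (s-1) * (1-t) ^ (-s))
  rw [phi_img, realBeta_integral h0 h1] at h
  rw [h]
  exact setIntegral_congr_fun measurableSet_Ioi (fun x hx => (phi_integrand_eq hx).symm)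

lemma mellin_integrable {s : ℝ} (h0 : 0 < s) (h1 : s < 1) :
    IntegrableOn (fun x : ℝ => x ^ (s-1) / (1 + x)) (Ioi 0) := by
  have h := (integrableOn_image_iff_integrableOn_abs_deriv_smul measurableSet_Ioi phi_deriv phi_inj
      (fun t => t ^ (s-1) * (1-t) ^ (-s))).mp
  rw [phi_img] at h
  exact ((h (realBeta_integrable h0 h1)).congr_fun (fun x hx => phi_integrand_eq hx) measurableSet_Ioi)

end CoV

section Halfline
variable {l d : ℝ}

lemma h_scaled_eq (hd : 0 < d) (h1 : l < 1) {v : ℝ} (hv : v ∈ Ioi (0:ℝ)) :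
    (d^2*v) ^ ((l-1)/2) / (d^2*v + d^2) = (d ^ (l-1) / d^2) * (v ^ ((l+1)/2 - 1) / (1+v)) := by
  have hv0 : (0:ℝ) < v := hv
  have e1 : (d^2*v) ^ ((l-1)/2) = d^(l-1) * v^((l-1)/2) := by
    rw [Real.mul_rpow (by positivity) hv0.le]
    congr 1
    rw [← Real.rpow_natCast d 2, ← Real.rpow_mul hd.le]
    congr 1
    push_cast
    ring
  have e2 : d^2*v + d^2 = d^2 * (1+v) := by ring
  rw [e1, e2, show (l+1)/2 - 1 = (l-1)/2 by ring]
  field_simp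

lemma sq_comp_eq (h0 : 0 < l) (h1 : l < 1) {d : ℝ} {x : ℝ} (hx : x ∈ Ioi (0:ℝ)) :
    (2 * x ^ ((2:ℝ)-1)) • ((x ^ (2:ℝ)) ^ ((l-1)/2) / (x ^ (2:ℝ) + d^2))
      = 2 * (x ^ l / (x^2 + d^2)) := by
  have hx0 : (0:ℝ) < x := hx
  have e1 : x ^ (2:ℝ) = x^2 := by
    rw [← Real.rpow_natCast x 2]; norm_num
  have e2 : (x ^ (2:ℝ)) ^ ((l-1)/2) = x ^ (l-1) := by
    rw [← Real.rpow_mul hx0.le]; congr 1; ring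
  rw [e2, e1, smul_eq_mul]
  rw [show (2:ℝ)-1 = 1 by norm_num, Real.rpow_one]
  rw [mul_assoc, div_eq_mul_inv (x^(l-1)) _, ← mul_assoc x, ← Real.rpow_one_add' hx0.le (by intro h; apply h0.ne; linarith)]
  rw [show 1 + (l-1) = l by ring, div_eq_mul_inv]

lemma cauchy_halfline_integral (h0 : 0 < l) (h1 : l < 1) (hd : 0 < d) :
    ∫ x in Ioi (0:ℝ), x ^ l / (x^2 + d^2) = d ^ (l-1) * π / (2 * Real.cos (π * l / 2)) := by
  set s : ℝ := (l+1)/2 with hs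
  have h0s : 0 < s := by rw [hs]; linarith
  have h1s : s < 1 := by rw [hs]; linarith
  have hsin : Real.sin (π * s) = Real.cos (π * l / 2) := by
    rw [show π * s = π * l / 2 + π / 2 by rw [hs]; ring, Real.sin_add_pi_div_two]
  set h : ℝ → ℝ := fun u => u ^ ((l-1)/2) / (u + d^2) with hh
  have hd2 : (0:ℝ) < d^2 := by positivity
  -- scaling
  have hscale : ∫ u in Ioi (0:ℝ), h u = d^2 * ∫ v in Ioi (0:ℝ), h (d^2 * v) := by
    rw [integral_comp_mul_left_Ioi h 0 hd2, mul_zero, smul_eq_mul, ← mul_assoc,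
      mul_inv_cancel₀ hd2.ne', one_mul]
  have hval : ∫ v in Ioi (0:ℝ), h (d^2 * v)
      = (d ^ (l-1) / d^2) * (π / Real.sin (π * s)) := by
    rw [← mellin_integral h0s h1s, ← integral_const_mul]
    exact setIntegral_congr_fun measurableSet_Ioi (fun v hv => h_scaled_eq hd h1 hv)
  -- sq substitution
  have hsq : ∫ x in Ioi (0:ℝ), (2 * x ^ ((2:ℝ)-1)) • h (x ^ (2:ℝ)) = ∫ u in Ioi (0:ℝ), h u :=
    integral_comp_rpow_Ioi_of_pos (by norm_num)
  have hsq2 : ∫ x in Ioi (0:ℝ), (2 * x ^ ((2:ℝ)-1)) • h (x ^ (2:ℝ))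
      = 2 * ∫ x in Ioi (0:ℝ), x ^ l / (x^2 + d^2) := by
    rw [← integral_const_mul]
    exact setIntegral_congr_fun measurableSet_Ioi (fun x hx => sq_comp_eq h0 h1 hx)
  have key := hsq2.symm.trans (hsq.trans (hscale.trans (by rw [hval])))
  rw [hsin] at key
  have hcos : 0 < Real.cos (π * l / 2) := by
    apply Real.cos_pos_of_mem_Ioo
    constructor
    · have : 0 < π := Real.pi_pos
      nlinarith
    · have : 0 < π := Real.pi_pos
      nlinarith
  have hT : ∫ x in Ioi (0:ℝ), x ^ l / (x^2 + d^2)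
      = (d^2 * (d ^ (l-1) / d^2 * (π / Real.cos (π * l / 2)))) / 2 := by linarith
  rw [hT]
  field_simp

lemma cauchy_halfline_integrable (h0 : 0 < l) (h1 : l < 1) (hd : 0 < d) :
    IntegrableOn (fun x : ℝ => x ^ l / (x^2 + d^2)) (Ioi 0) := by
  set s : ℝ := (l+1)/2 with hs
  have h0s : 0 < s := by rw [hs]; linarith
  have h1s : s < 1 := by rw [hs]; linarith
  set h : ℝ → ℝ := fun u => u ^ ((l-1)/2) / (u + d^2) with hh
  have hd2 : (0:ℝ) < d^2 := by positivity
  have Ih : IntegrableOn h (Ioi 0) := by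
    have := (integrableOn_Ioi_comp_mul_left_iff h 0 hd2)
    rw [mul_zero] at this
    rw [← this]
    have hI : IntegrableOn (fun v : ℝ => (d ^ (l-1) / d^2) * (v ^ (s - 1) / (1+v))) (Ioi 0) :=
      (mellin_integrable h0s h1s).const_mul _
    exact IntegrableOn.congr_fun hI (fun v hv => (h_scaled_eq hd h1 hv).symm) measurableSet_Ioi
  have := (integrableOn_Ioi_comp_rpow_iff (f := h) (p := 2) (by norm_num)).mpr Ih
  have h2 : IntegrableOn (fun x : ℝ => 2 * (x ^ l / (x^2 + d^2))) (Ioi 0) := by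
    refine IntegrableOn.congr_fun this (fun x hx => ?_) measurableSet_Ioi
    rw [← sq_comp_eq h0 h1 hx]
    congr 1
    rw [abs_of_pos (by norm_num)]
  have h3 := h2.const_mul (1/2)
  refine IntegrableOn.congr_fun h3 (fun x hx => by ring) measurableSet_Ioi

end Halfline

section CauchyMoment
variable {l d : ℝ}

lemma integrable_comp_abs' {f : ℝ → ℝ} (hf : IntegrableOn f (Ioi 0)) :
    Integrable (fun x => f |x|) := by
  have hIoi : IntegrableOn (fun x : ℝ => f |x|) (Ioi 0) :=
    IntegrableOn.congr_fun hf (fun x hx => by rw [abs_of_pos (mem_Ioi.mp hx)]) measurableSet_Ioi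
  have int_Iic : IntegrableOn (fun x : ℝ ↦ f |x|) (Iic 0) := by
    rw [← Measure.map_neg_eq_self (volume : Measure ℝ)]
    let m : MeasurableEmbedding fun x : ℝ => -x := (Homeomorph.neg ℝ).measurableEmbedding
    rw [m.integrableOn_map_iff]
    simp_rw [Function.comp_def, abs_neg, neg_preimage, neg_Iic, neg_zero]
    exact Iff.mpr integrableOn_Ici_iff_integrableOn_Ioi hIoi
  have := int_Iic.union hIoi
  rwa [Iic_union_Ioi, integrableOn_univ] at this

lemma cauchy_density_meas (hd : 0 < d) :
    Measurable fun x : ℝ => (d / (π * (x ^ 2 + d ^ 2))).toNNReal := by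
  apply Measurable.real_toNNReal
  apply Measurable.div measurable_const
  apply Measurable.mul measurable_const
  exact ((measurable_id.pow_const 2).add_const _)

lemma cauchy_density_nonneg (hd : 0 < d) (x : ℝ) : 0 ≤ d / (π * (x ^ 2 + d ^ 2)) := by
  have := Real.pi_pos
  positivity

lemma cauchy_integrand_Ioi (h0 : 0 < l) (h1 : l < 1) (hd : 0 < d) :
    IntegrableOn (fun x : ℝ => d / (π * (x ^ 2 + d ^ 2)) * |x| ^ l) (Ioi 0) := by
  have h := (cauchy_halfline_integrable h0 h1 hd).const_mul (d / π)
  refine IntegrableOn.congr_fun h (fun x hx => ?_) measurableSet_Ioi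
  have hx0 : (0:ℝ) < x := hx
  have hπ := Real.pi_pos
  rw [abs_of_pos hx0]
  field_simp

lemma cauchy_abs_rpow_integrable (h0 : 0 < l) (h1 : l < 1) (hd : 0 < d) :
    Integrable (fun x : ℝ => |x| ^ l) (_root_.cauchyMeasure d) := by
  rw [_root_.cauchyMeasure]
  have hm := cauchy_density_meas (d := d) hd
  rw [show (fun x : ℝ => ENNReal.ofReal (d / (π * (x ^ 2 + d ^ 2))))
      = (fun x : ℝ => ((d / (π * (x ^ 2 + d ^ 2))).toNNReal : ℝ≥0∞)) from rfl,
    integrable_withDensity_iff_integrable_smul hm]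
  have key : Integrable (fun x : ℝ => d / (π * (x ^ 2 + d ^ 2)) * |x| ^ l) := by
    have : IntegrableOn (fun t : ℝ => d / (π * (t ^ 2 + d ^ 2)) * t ^ l) (Ioi 0) := by
      refine IntegrableOn.congr_fun (cauchy_integrand_Ioi h0 h1 hd) (fun x hx => ?_)
        measurableSet_Ioi
      rw [abs_of_pos (mem_Ioi.mp hx)]
    have h2 := integrable_comp_abs' this
    refine h2.congr (Filter.Eventually.of_forall fun x => ?_)
    simp only [sq_abs]
  refine key.congr (Filter.Eventually.of_forall fun x => ?_)
  simp only [NNReal.smul_def, smul_eq_mul, Real.coe_toNNReal _ (cauchy_density_nonneg hd x)]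

lemma cauchy_abs_rpow_integral (h0 : 0 < l) (h1 : l < 1) (hd : 0 < d) :
    ∫ x, |x| ^ l ∂(_root_.cauchyMeasure d) = d ^ l / Real.cos (π * l / 2) := by
  rw [_root_.cauchyMeasure]
  have hm := cauchy_density_meas (d := d) hd
  rw [show (fun x : ℝ => ENNReal.ofReal (d / (π * (x ^ 2 + d ^ 2))))
      = (fun x : ℝ => ((d / (π * (x ^ 2 + d ^ 2))).toNNReal : ℝ≥0∞)) from rfl,
    integral_withDensity_eq_integral_smul hm]
  have e1 : (fun x : ℝ => (d / (π * (x ^ 2 + d ^ 2))).toNNReal • |x| ^ l)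
      = fun x : ℝ => (fun t : ℝ => d / (π * (t ^ 2 + d ^ 2)) * t ^ l) |x| := by
    funext x
    simp only [NNReal.smul_def, smul_eq_mul, Real.coe_toNNReal _ (cauchy_density_nonneg hd x),
      sq_abs]
  rw [e1]
  rw [integral_comp_abs (f := fun t : ℝ => d / (π * (t ^ 2 + d ^ 2)) * t ^ l)]
  have e2 : ∫ t in Ioi (0:ℝ), d / (π * (t ^ 2 + d ^ 2)) * t ^ l
      = (d / π) * ∫ t in Ioi (0:ℝ), t ^ l / (t ^ 2 + d ^ 2) := by
    rw [← integral_const_mul]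
    refine setIntegral_congr_fun measurableSet_Ioi (fun x hx => ?_)
    have hπ := Real.pi_pos
    field_simp
  rw [e2, cauchy_halfline_integral h0 h1 hd]
  have hπ := Real.pi_pos
  have hdl : d * d ^ (l - 1) = d ^ l := by
    nth_rewrite 1 [← Real.rpow_one d]
    rw [← Real.rpow_add hd]
    norm_num
  have hcos : Real.cos (π * l / 2) ≠ 0 := by
    refine (Real.cos_pos_of_mem_Ioo ⟨?_, ?_⟩).ne' <;> nlinarith
  field_simp
  rw [← hdl]

end CauchyMoment


section Prob
variable {Ω : Type*} [MeasurableSpace Ω] {μ : Measure Ω} [IsProbabilityMeasure μ]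
  {ι : Type*} {f : ι → Ω → ℝ}

lemma indep_integral_prod_nonneg (hindep : iIndepFun f μ)
    (hmeas : ∀ i, Measurable (f i)) (hnn : ∀ i ω, 0 ≤ f i ω) (s : Finset ι) :
    ∫ ω, ∏ j ∈ s, f j ω ∂μ = ∏ j ∈ s, ∫ ω, f j ω ∂μ := by
  classical
  induction s using Finset.induction with
  | empty => simp
  | @insert i s hi ih =>
    have hXY := hindep.indepFun_finsetProd_of_notMem hmeas hi
    have h := hXY.integral_mul_eq_mul_integral
      (AEMeasurable.aestronglyMeasurable (by
        have := (Finset.measurable_prod s (fun j _ => hmeas j)).aemeasurable (μ := μ)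
        refine this.congr (Filter.Eventually.of_forall fun ω => ?_)
        simp [Finset.prod_apply]))
      (hmeas i).aestronglyMeasurable
    simp_rw [Finset.prod_insert hi]
    have e : (fun ω => f i ω * ∏ j ∈ s, f j ω) = (∏ j ∈ s, f j) * f i := by
      funext ω
      simp only [Pi.mul_apply, Finset.prod_apply]
      ring
    have e2 : integral μ (∏ j ∈ s, f j) = ∫ ω, ∏ j ∈ s, f j ω ∂μ := by
      congr 1
      funext ω
      simp [Finset.prod_apply]
    rw [show ∫ ω, f i ω * ∏ j ∈ s, f j ω ∂μ = ∫ ω, ((∏ j ∈ s, f j) * f i) ω ∂μ by rw [e],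
      show ∫ ω, ((∏ j ∈ s, f j) * f i) ω ∂μ = integral μ ((∏ j ∈ s, f j) * f i) from rfl,
      h, e2, ih]
    ring

lemma indep_integrable_prod (hindep : iIndepFun f μ)
    (hmeas : ∀ i, Measurable (f i)) (hint : ∀ i, Integrable (f i) μ) (s : Finset ι) :
    Integrable (fun ω => ∏ j ∈ s, f j ω) μ := by
  classical
  induction s using Finset.induction with
  | empty => simp
  | @insert i s hi ih =>
    have hXY := hindep.indepFun_finsetProd_of_notMem hmeas hi
    have hX : Integrable (∏ j ∈ s, f j) μ := by
      refine ih.congr (Filter.Eventually.of_forall fun ω => ?_)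
      simp [Finset.prod_apply]
    have h := hXY.integrable_mul hX (hint i)
    refine h.congr (Filter.Eventually.of_forall fun ω => ?_)
    simp only [Pi.mul_apply, Finset.prod_apply, Finset.prod_insert hi]
    ring
end Prob

theorem geometric_mean_estimator_variance
    {Ω : Type*} [MeasurableSpace Ω] (μ : Measure Ω) [IsProbabilityMeasure μ]
    (d : ℝ) (hd : 0 < d) (k : ℕ) (hk : 2 < k)
    (X : Fin k → Ω → ℝ) (hmeas : ∀ i, Measurable (X i))
    (hindep : iIndepFun X μ)
    (hlaw : ∀ i, Measure.map (X i) μ = _root_.cauchyMeasure d) :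
    variance (fun ω => Real.cos (π / (2 * k)) ^ k * ∏ j, |X j ω| ^ ((k : ℝ)⁻¹)) μ
      = d ^ 2 * (Real.cos (π / (2 * k)) ^ (2 * k) / Real.cos (π / k) ^ k - 1) := by
  have hkR : (2:ℝ) < (k:ℝ) := by exact_mod_cast hk
  have hkpos : (0:ℝ) < (k:ℝ) := by linarith
  have hk0 : (k:ℝ) ≠ 0 := hkpos.ne'
  have h01 : 0 < ((k:ℝ))⁻¹ := inv_pos.mpr hkpos
  have h11 : ((k:ℝ))⁻¹ < 1 := by
    rw [inv_lt_one_iff₀]; right; linarith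
  have h02 : 0 < 2 * ((k:ℝ))⁻¹ := by positivity
  have h12 : 2 * ((k:ℝ))⁻¹ < 1 := by
    rw [mul_inv_lt_iff₀ hkpos, one_mul]; exact hkR
  have hπ := Real.pi_pos
  -- angle rewrites
  have hang1 : π * ((k:ℝ))⁻¹ / 2 = π / (2 * (k:ℝ)) := by
    rw [← div_eq_mul_inv, div_div, mul_comm (k:ℝ) 2]
  have hang2 : π * (2 * ((k:ℝ))⁻¹) / 2 = π / (k:ℝ) := by
    field_simp
  -- measurability of the transforms
  have hg1 : Measurable fun x : ℝ => |x| ^ ((k:ℝ)⁻¹) :=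
    (continuous_abs.rpow_const (fun x => Or.inr h01.le)).measurable
  have hg2 : Measurable fun x : ℝ => |x| ^ (2 * (k:ℝ)⁻¹) :=
    (continuous_abs.rpow_const (fun x => Or.inr h02.le)).measurable
  -- independence of transformed families
  have hindep1 : iIndepFun (fun i ω => |X i ω| ^ ((k:ℝ)⁻¹)) μ :=
    hindep.comp (fun _ x => |x| ^ ((k:ℝ)⁻¹)) (fun _ => hg1)
  have hindep2 : iIndepFun (fun i ω => |X i ω| ^ (2 * (k:ℝ)⁻¹)) μ :=
    hindep.comp (fun _ x => |x| ^ (2 * (k:ℝ)⁻¹)) (fun _ => hg2)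
  -- per-coordinate moments
  have hm1 : ∀ i, ∫ ω, |X i ω| ^ ((k:ℝ)⁻¹) ∂μ
      = d ^ ((k:ℝ)⁻¹) / Real.cos (π / (2 * (k:ℝ))) := by
    intro i
    rw [← hang1, ← cauchy_abs_rpow_integral h01 h11 hd, ← hlaw i,
      integral_map (hmeas i).aemeasurable hg1.aestronglyMeasurable]
  have hm2 : ∀ i, ∫ ω, |X i ω| ^ (2 * (k:ℝ)⁻¹) ∂μ
      = d ^ (2 * (k:ℝ)⁻¹) / Real.cos (π / (k:ℝ)) := by
    intro i
    rw [← hang2, ← cauchy_abs_rpow_integral h02 h12 hd, ← hlaw i,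
      integral_map (hmeas i).aemeasurable hg2.aestronglyMeasurable]
  have hint2 : ∀ i, Integrable (fun ω => |X i ω| ^ (2 * (k:ℝ)⁻¹)) μ := by
    intro i
    have := (integrable_map_measure hg2.aestronglyMeasurable (hmeas i).aemeasurable).mp
      (by rw [hlaw i]; exact cauchy_abs_rpow_integrable h02 h12 hd)
    exact this
  set c : ℝ := Real.cos (π / (2 * (k:ℝ))) with hc
  have hcpos : 0 < c := by
    rw [hc]
    apply Real.cos_pos_of_mem_Ioo
    constructor
    · have : 0 < π / (2 * (k:ℝ)) := by positivity
      linarith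
    · rw [div_lt_div_iff₀ (by positivity) (by norm_num : (0:ℝ) < 2)]
      nlinarith
  set Y : Ω → ℝ := fun ω => c ^ k * ∏ j, |X j ω| ^ ((k:ℝ)⁻¹) with hY
  have hYmeas : Measurable Y := by
    apply Measurable.const_mul
    exact Finset.measurable_prod _ (fun j _ => hg1.comp (hmeas j))
  -- square identity
  have hsq : ∀ ω, (Y ω) ^ 2 = (c ^ k) ^ 2 * ∏ j, |X j ω| ^ (2 * (k:ℝ)⁻¹) := by
    intro ω
    rw [hY, mul_pow, ← Finset.prod_pow]
    congr 1
    refine Finset.prod_congr rfl (fun j _ => ?_)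
    rw [← Real.rpow_natCast (|X j ω| ^ ((k:ℝ)⁻¹)) 2, ← Real.rpow_mul (abs_nonneg _)]
    norm_num
    rw [mul_comm]
  -- Memℒp 2
  have hY2int : Integrable (fun ω => (Y ω) ^ 2) μ := by
    have h := (indep_integrable_prod hindep2 (fun i => hg2.comp (hmeas i)) hint2
      Finset.univ).const_mul ((c ^ k) ^ 2)
    refine h.congr (Filter.Eventually.of_forall fun ω => ?_)
    exact (hsq ω).symm
  have hYmem : MemLp Y 2 μ := by
    refine (memLp_two_iff_integrable_sq hYmeas.aestronglyMeasurable).mpr ?_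
    refine hY2int.congr (Filter.Eventually.of_forall fun ω => rfl)
  -- expectations
  have hEY : ∫ ω, Y ω ∂μ = d := by
    rw [hY]
    rw [integral_const_mul]
    rw [indep_integral_prod_nonneg hindep1 (fun i => hg1.comp (hmeas i))
      (fun i ω => Real.rpow_nonneg (abs_nonneg _) _) Finset.univ]
    have : ∀ j : Fin k, ∫ ω, |X j ω| ^ ((k:ℝ)⁻¹) ∂μ = d ^ ((k:ℝ)⁻¹) / c := fun j => hm1 j
    rw [Finset.prod_congr rfl (fun j _ => this j), Finset.prod_const,
      Finset.card_univ, Fintype.card_fin, div_pow]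
    rw [← Real.rpow_natCast (d ^ ((k:ℝ)⁻¹)) k, ← Real.rpow_mul hd.le,
      inv_mul_cancel₀ hk0, Real.rpow_one]
    field_simp
  have hEY2 : ∫ ω, (Y ω) ^ 2 ∂μ = (c ^ k) ^ 2 * (d ^ 2 / Real.cos (π / (k:ℝ)) ^ k) := by
    rw [show (fun ω => (Y ω) ^ 2) = fun ω => (c ^ k) ^ 2 * ∏ j, |X j ω| ^ (2 * (k:ℝ)⁻¹) from
      funext hsq]
    rw [integral_const_mul]
    rw [indep_integral_prod_nonneg hindep2 (fun i => hg2.comp (hmeas i))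
      (fun i ω => Real.rpow_nonneg (abs_nonneg _) _) Finset.univ]
    rw [Finset.prod_congr rfl (fun j _ => hm2 j), Finset.prod_const,
      Finset.card_univ, Fintype.card_fin, div_pow]
    rw [← Real.rpow_natCast (d ^ (2 * (k:ℝ)⁻¹)) k, ← Real.rpow_mul hd.le,
      show 2 * ((k:ℝ))⁻¹ * (k:ℝ) = 2 by field_simp,
      show (2:ℝ) = ((2:ℕ):ℝ) by norm_num, Real.rpow_natCast]
  -- conclude
  have hvar := variance_eq_sub hYmem
  have hY2 : μ[Y ^ 2] = ∫ ω, (Y ω) ^ 2 ∂μ := rfl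
  have hY1 : μ[Y] = ∫ ω, Y ω ∂μ := rfl
  rw [hvar, hY2, hY1, hEY, hEY2]
  rw [show c ^ (2 * k) = (c ^ k) ^ 2 by rw [← pow_mul, mul_comm]]
  ring
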